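/- Let k, k̃ : [0,∞) → ℝ be continuously differentiable with k(0) ≠ 0 and k̃(0) ≠ 0. For h > 0 define the symmetric positive semidefinite 2×2 matrix M(h) = ∫_0^h [[k(r)², k(r) k̃(r)], [k(r) k̃(r), k̃(r)²]] dr. Then the smallest eigenvalue of M(h) satisfies λ_min(M(h)) = O(h²) as h → 0+; that is, there exist C > 0 and h₀ > 0 such that λ_min(M(h)) ≤ C h² for all h ∈ (0, h₀). -/

import Mathlib

open MeasureTheory Set Matrix

/-- The smallest eigenvalue of a real symmetric matrix, expressed as the infimum of
`ξᵀ M ξ` over Euclidean unit vectors `ξ`. -/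
noncomputable def lambdaMin {n : Type*} [Fintype n] (M : Matrix n n ℝ) : ℝ :=
  sInf {r : ℝ | ∃ ξ : n → ℝ, (∑ i, ξ i ^ 2) = 1 ∧ r = ξ ⬝ᵥ M.mulVec ξ}

lemma quad_form_eval (a b c : ℝ) (ξ : Fin 2 → ℝ) :
    ξ ⬝ᵥ (!![a, b; b, c]).mulVec ξ
      = a * ξ 0 ^ 2 + 2 * b * (ξ 0 * ξ 1) + c * ξ 1 ^ 2 := by
  simp [Matrix.mulVec, dotProduct, Fin.sum_univ_two, Matrix.vecHead, Matrix.vecTail]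
  ring

/-- for continuously differentiable kernels `k, k̃` on `[0,∞)` with
`k(0) ≠ 0` and `k̃(0) ≠ 0`, the smallest eigenvalue of the Gram matrix
`M(h) = ∫_0^h [[k², k k̃], [k k̃, k̃²]] dr` is `O(h²)` as `h → 0+`. -/
theorem stmt10 (k ktil : ℝ → ℝ)
    (hk : ContDiffOn ℝ 1 k (Ici 0)) (hktil : ContDiffOn ℝ 1 ktil (Ici 0))
    (hk0 : k 0 ≠ 0) (hktil0 : ktil 0 ≠ 0) :
    ∃ C > 0, ∃ h₀ > 0, ∀ h : ℝ, 0 < h → h < h₀ →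
      lambdaMin
        !![∫ r in Ioc (0 : ℝ) h, (k r) ^ 2, ∫ r in Ioc (0 : ℝ) h, k r * ktil r;
           ∫ r in Ioc (0 : ℝ) h, k r * ktil r, ∫ r in Ioc (0 : ℝ) h, (ktil r) ^ 2] ≤
      C * h ^ 2 := by
  set s : ℝ := k 0 with hs
  set t : ℝ := ktil 0 with ht
  have hN2 : (0:ℝ) < s ^ 2 + t ^ 2 := by positivity
  set N2 : ℝ := s ^ 2 + t ^ 2 with hN2def
  -- Lipschitz bound for f := t • k - s • ktil near 0, with f 0 = 0
  set f : ℝ → ℝ := fun r => t * k r - s * ktil r with hf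
  have hfC1 : ContDiffOn ℝ 1 f (Ici 0) :=
    (hk.const_smul t).sub (hktil.const_smul s)
  obtain ⟨K, u, hu, hK⟩ :=
    (hfC1 0 (self_mem_Ici)).exists_lipschitzOnWith (convex_Ici 0)
  obtain ⟨δ, hδ0, hδsub⟩ := mem_nhdsGE_iff_exists_Icc_subset.1 hu
  have hf0 : f 0 = 0 := by simp [hf, hs, ht]; ring
  have hfbd : ∀ r ∈ Icc (0:ℝ) δ, |f r| ≤ K * r := by
    intro r hr
    have := hK.dist_le_mul r (hδsub hr) 0 (hδsub ⟨le_refl 0, le_of_lt hδ0⟩)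
    rw [Real.dist_eq, Real.dist_eq, hf0, sub_zero, sub_zero,
      abs_of_nonneg hr.1] at this
    exact this
  refine ⟨((K:ℝ) ^ 2 + 1) / N2, by positivity, min δ 1, lt_min hδ0 one_pos, ?_⟩
  intro h hh0 hh1
  have hhδ : h ≤ δ := le_of_lt (lt_of_lt_of_le hh1 (min_le_left _ _))
  have hh1' : h ≤ 1 := le_of_lt (lt_of_lt_of_le hh1 (min_le_right _ _))
  -- integrability
  have hck : ContinuousOn k (Icc 0 h) :=
    hk.continuousOn.mono (Icc_subset_Ici_self)
  have hcktil : ContinuousOn ktil (Icc 0 h) :=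
    hktil.continuousOn.mono (Icc_subset_Ici_self)
  have ik2 : IntegrableOn (fun r => (k r) ^ 2) (Ioc 0 h) :=
    ((hck.pow 2).integrableOn_Icc).mono_set Ioc_subset_Icc_self
  have iktil2 : IntegrableOn (fun r => (ktil r) ^ 2) (Ioc 0 h) :=
    ((hcktil.pow 2).integrableOn_Icc).mono_set Ioc_subset_Icc_self
  have ikk : IntegrableOn (fun r => k r * ktil r) (Ioc 0 h) :=
    ((hck.mul hcktil).integrableOn_Icc).mono_set Ioc_subset_Icc_self
  have if2 : IntegrableOn (fun r => (f r) ^ 2) (Ioc 0 h) := by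
    have : ContinuousOn f (Icc 0 h) :=
      ((continuousOn_const.mul hck).sub (continuousOn_const.mul hcktil))
    exact (this.pow 2).integrableOn_Icc.mono_set Ioc_subset_Icc_self
  set a : ℝ := ∫ r in Ioc (0:ℝ) h, (k r) ^ 2 with ha
  set b : ℝ := ∫ r in Ioc (0:ℝ) h, k r * ktil r with hb
  set c : ℝ := ∫ r in Ioc (0:ℝ) h, (ktil r) ^ 2 with hc
  -- key integral identity
  have key : (∫ r in Ioc (0:ℝ) h, (f r) ^ 2)
      = t ^ 2 * a - 2 * (s * t) * b + s ^ 2 * c := by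
    have : (∫ r in Ioc (0:ℝ) h, (f r) ^ 2)
        = ∫ r in Ioc (0:ℝ) h,
          (t ^ 2 * (k r) ^ 2 - 2 * (s * t) * (k r * ktil r)
            + s ^ 2 * (ktil r) ^ 2) := by
      apply setIntegral_congr_fun measurableSet_Ioc
      intro r _
      simp only [hf]
      ring
    have i1 : Integrable (fun r => t ^ 2 * (k r) ^ 2 - 2 * (s * t) * (k r * ktil r))
        (volume.restrict (Ioc 0 h)) := (ik2.const_mul _).sub (ikk.const_mul _)
    have i2 : Integrable (fun r => s ^ 2 * (ktil r) ^ 2)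
        (volume.restrict (Ioc 0 h)) := iktil2.const_mul _
    rw [this, integral_add i1 i2,
      integral_sub (ik2.const_mul _) (ikk.const_mul _),
      integral_const_mul, integral_const_mul, integral_const_mul]
  -- bound the integral of f² by K² h³ ≤ K² h²
  have hint : (∫ r in Ioc (0:ℝ) h, (f r) ^ 2) ≤ (K:ℝ) ^ 2 * h ^ 2 := by
    have step1 : (∫ r in Ioc (0:ℝ) h, (f r) ^ 2)
        ≤ ∫ r in Ioc (0:ℝ) h, (K:ℝ) ^ 2 * r ^ 2 := by
      apply setIntegral_mono_on if2
        ((continuous_const.mul (continuous_pow 2)).integrableOn_Ioc)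
        measurableSet_Ioc
      intro r hr
      have hr0 : 0 ≤ r := le_of_lt hr.1
      have hbd := hfbd r ⟨hr0, hr.2.trans hhδ⟩
      have : (f r)^2 ≤ (K * r)^2 := by
        have h1 : |f r| ^ 2 ≤ (K * r) ^ 2 := by
          apply pow_le_pow_left₀ (abs_nonneg _) hbd
        simpa [sq_abs] using h1
      show (f r)^2 ≤ (K:ℝ)^2 * r^2
      linarith [this]
    have step2 : (∫ r in Ioc (0:ℝ) h, (K:ℝ) ^ 2 * r ^ 2)
        = (K:ℝ) ^ 2 * (h ^ 3 / 3) := by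
      rw [← intervalIntegral.integral_of_le (le_of_lt hh0),
        intervalIntegral.integral_const_mul, integral_pow]
      norm_num
    have : (K:ℝ) ^ 2 * (h ^ 3 / 3) ≤ (K:ℝ) ^ 2 * h ^ 2 := by
      have : h ^ 3 / 3 ≤ h ^ 2 := by nlinarith
      exact mul_le_mul_of_nonneg_left this (by positivity)
    linarith [step1, step2 ▸ step1]
  -- the test vector
  set NR : ℝ := Real.sqrt N2 with hNR
  have hNRpos : 0 < NR := Real.sqrt_pos.2 hN2
  have hNRsq : NR ^ 2 = N2 := Real.sq_sqrt (le_of_lt hN2)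
  set ξ : Fin 2 → ℝ := ![t / NR, -s / NR] with hξ
  have hξunit : (∑ i, ξ i ^ 2) = 1 := by
    rw [Fin.sum_univ_two]
    simp only [hξ, Matrix.cons_val_zero, Matrix.cons_val_one, Matrix.head_cons]
    field_simp
    rw [hNRsq]
    ring
  have hval : ξ ⬝ᵥ (!![a, b; b, c]).mulVec ξ
      = (t ^ 2 * a - 2 * (s * t) * b + s ^ 2 * c) / N2 := by
    rw [quad_form_eval, ← hNRsq]
    simp only [hξ, Matrix.cons_val_zero, Matrix.cons_val_one, Matrix.head_cons]
    field_simp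
    ring
  -- nonnegativity: every element of the set is an integral of a square
  have hquad_nonneg : ∀ ξ' : Fin 2 → ℝ,
      ξ' ⬝ᵥ (!![a, b; b, c]).mulVec ξ' ≥ 0 := by
    intro ξ'
    rw [quad_form_eval]
    have : a * ξ' 0 ^ 2 + 2 * b * (ξ' 0 * ξ' 1) + c * ξ' 1 ^ 2
        = ∫ r in Ioc (0:ℝ) h, (ξ' 0 * k r + ξ' 1 * ktil r) ^ 2 := by
      have : (∫ r in Ioc (0:ℝ) h, (ξ' 0 * k r + ξ' 1 * ktil r) ^ 2)
          = ∫ r in Ioc (0:ℝ) h,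
            (ξ' 0 ^ 2 * (k r) ^ 2 + 2 * (ξ' 0 * ξ' 1) * (k r * ktil r)
              + ξ' 1 ^ 2 * (ktil r) ^ 2) := by
        apply setIntegral_congr_fun measurableSet_Ioc
        intro r _
        ring
      have i1 : Integrable (fun r => ξ' 0 ^ 2 * (k r) ^ 2 + 2 * (ξ' 0 * ξ' 1) * (k r * ktil r))
          (volume.restrict (Ioc 0 h)) := (ik2.const_mul _).add (ikk.const_mul _)
      have i2 : Integrable (fun r => ξ' 1 ^ 2 * (ktil r) ^ 2)
          (volume.restrict (Ioc 0 h)) := iktil2.const_mul _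
      rw [this, integral_add i1 i2,
        integral_add (ik2.const_mul _) (ikk.const_mul _),
        integral_const_mul, integral_const_mul, integral_const_mul]
      ring
    rw [this]
    apply setIntegral_nonneg measurableSet_Ioc
    intro r _
    positivity
  have hbdd : BddBelow {r : ℝ | ∃ ξ' : Fin 2 → ℝ,
      (∑ i, ξ' i ^ 2) = 1 ∧ r = ξ' ⬝ᵥ (!![a, b; b, c]).mulVec ξ'} := by
    refine ⟨0, ?_⟩
    rintro r ⟨ξ', _, rfl⟩
    exact hquad_nonneg ξ'
  have hmem : ξ ⬝ᵥ (!![a, b; b, c]).mulVec ξ ∈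
      {r : ℝ | ∃ ξ' : Fin 2 → ℝ,
        (∑ i, ξ' i ^ 2) = 1 ∧ r = ξ' ⬝ᵥ (!![a, b; b, c]).mulVec ξ'} :=
    ⟨ξ, hξunit, rfl⟩
  have hlam : lambdaMin !![a, b; b, c] ≤ ξ ⬝ᵥ (!![a, b; b, c]).mulVec ξ :=
    csInf_le hbdd hmem
  calc lambdaMin !![a, b; b, c] ≤ ξ ⬝ᵥ (!![a, b; b, c]).mulVec ξ := hlam
    _ = (t ^ 2 * a - 2 * (s * t) * b + s ^ 2 * c) / N2 := hval
    _ = (∫ r in Ioc (0:ℝ) h, (f r) ^ 2) / N2 := by rw [key]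
    _ ≤ ((K:ℝ) ^ 2 * h ^ 2) / N2 := by gcongr
    _ ≤ (((K:ℝ) ^ 2 + 1) / N2) * h ^ 2 := by
        rw [div_mul_eq_mul_div]
        gcongr
        nlinarith [sq_nonneg h]
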